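/- Let X be a partially ordered set and σ : X → X an order-reversing involution without fixed points. Call a subset I ⊆ X an ideal if x ∈ I and y ≤ x imply y ∈ I; call an ideal σ-fat if x ∉ I implies σ(x) ∈ I, and σ-slim if x ∈ I implies σ(x) ∉ I. Then every minimal σ-fat ideal (minimal with respect to inclusion among σ-fat ideals) is both σ-fat and σ-slim (i.e., σ-balanced). -/

import Mathlib

/-- A subset `I` of a partially ordered set is an ideal if it is downward closed. -/
def IsIdeal {X : Type*} [PartialOrder X] (I : Set X) : Prop :=
  ∀ x ∈ I, ∀ y, y ≤ x → y ∈ I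

/-- An ideal is `σ`-fat if the complement of `I` is mapped into `I` by `σ`. -/
def IsFatIdeal {X : Type*} [PartialOrder X] (σ : X → X) (I : Set X) : Prop :=
  IsIdeal I ∧ ∀ x, x ∉ I → σ x ∈ I

/-- An ideal is `σ`-slim if it is disjoint from its `σ`-image. -/
def IsSlimIdeal {X : Type*} [PartialOrder X] (σ : X → X) (I : Set X) : Prop :=
  IsIdeal I ∧ ∀ x, x ∈ I → σ x ∉ I

/-- An ideal is `σ`-balanced if it is both `σ`-fat and `σ`-slim. -/
def IsBalancedIdeal {X : Type*} [PartialOrder X] (σ : X → X) (I : Set X) : Prop :=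
  IsFatIdeal σ I ∧ IsSlimIdeal σ I

/-- Every minimal `σ`-fat ideal is `σ`-balanced, where `σ` is an order-reversing
involution without fixed points. -/
theorem minimal_fat_ideal_is_balanced {X : Type*} [Finite X] [PartialOrder X] (σ : X → X)
    (hinv : ∀ x, σ (σ x) = x)
    (hrev : ∀ x y, x ≤ y → σ y ≤ σ x)
    (hfix : ∀ x, σ x ≠ x)
    (I : Set X) (hI : IsFatIdeal σ I)
    (hmin : ∀ J : Set X, IsFatIdeal σ J → J ⊆ I → J = I) :
    IsBalancedIdeal σ I := by
  refine ⟨hI, hI.1, ?_⟩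
  by_contra hbad
  push_neg at hbad
  obtain ⟨x0, hx0, hsx0⟩ := hbad
  -- S : elements of I whose image is also in I
  set S : Set X := {x | x ∈ I ∧ σ x ∈ I} with hS
  have hSne : S.Nonempty := ⟨x0, hx0, hsx0⟩
  obtain ⟨a, haS, hamax'⟩ := Set.Finite.exists_maximalFor id S (Set.toFinite S) hSne
  have hamax : ∀ b ∈ S, a ≤ b → a = b := fun b hb hab => le_antisymm hab (hamax' hb hab)
  have haI : a ∈ I := haS.1
  have hsaI : σ a ∈ I := haS.2
  -- a is not below σ a
  have hnle : ¬ a ≤ σ a := by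
    intro h
    have : σ a ∈ S := ⟨hsaI, by rw [hinv]; exact haI⟩
    exact hfix a (hamax (σ a) this h).symm
  -- the smaller fat ideal
  set J : Set X := {x | x ∈ I ∧ ¬ a ≤ x} with hJ
  have hJI : J ⊆ I := fun x hx => hx.1
  have hJideal : IsIdeal J := by
    intro x hx y hyx
    exact ⟨hI.1 x hx.1 y hyx, fun hay => hx.2 (le_trans hay hyx)⟩
  have hJfat : IsFatIdeal σ J := by
    refine ⟨hJideal, fun x hx => ?_⟩
    by_cases hxI : x ∈ I
    · -- then a ≤ x
      have hax : a ≤ x := by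
        by_contra h
        exact hx ⟨hxI, h⟩
      have hsxI : σ x ∈ I := hI.1 (σ a) hsaI (σ x) (hrev a x hax)
      refine ⟨hsxI, fun hasx => ?_⟩
      have hsxS : σ x ∈ S := ⟨hsxI, by rw [hinv]; exact hxI⟩
      have heq : a = σ x := hamax (σ x) hsxS hasx
      have : σ a = x := by rw [heq, hinv]
      exact hnle (this ▸ hax)
    · have hsxI : σ x ∈ I := hI.2 x hxI
      refine ⟨hsxI, fun hasx => ?_⟩
      have : x ≤ σ a := by
        have := hrev a (σ x) hasx
        rwa [hinv] at this
      exact hxI (hI.1 (σ a) hsaI x this)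
  have : J = I := hmin J hJfat hJI
  have haJ : a ∈ J := this ▸ haI
  exact haJ.2 le_rfl
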